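/- arXiv:2201.06626 — 4 statements merged into one kernel-verified Lean document; each statement's English description precedes it below -/
import Mathlib

section
/- Let Θ = ⟨V, c, C, d⟩ be an AH-polytope in ℝⁿ, let G be a p×n real matrix and g ∈ ℝᵖ, and let H = {x ∈ ℝⁿ | Gx ≤ g} (entrywise). Then ⟦Θ⟧ ∩ H equals the set represented by the AH-polytope Θ' = ⟨V', c', C', d'⟩ with V' = V, c' = c, C' the vertical stacking of C and GV, and d' the vertical stacking of d and g − Gc. -/
/-- The set represented by an AH-polytope `⟨V, c, C, d⟩`:
`{x ∈ ℝⁿ | ∃ α ∈ ℝᵐ, x = Vα + c ∧ Cα ≤ d}` (entrywise inequality). -/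
def ahSet {n m : ℕ} {κ : Type*} (V : Matrix (Fin n) (Fin m) ℝ) (c : Fin n → ℝ)
    (C : Matrix κ (Fin m) ℝ) (d : κ → ℝ) : Set (Fin n → ℝ) :=
  {x | ∃ α : Fin m → ℝ, x = V.mulVec α + c ∧ ∀ i, C.mulVec α i ≤ d i}

/-- Intersection of an AH-polytope with a half-space `{x | Gx ≤ g}`: it is the AH-polytope
`⟨V, c, [C; GV], [d; g − Gc]⟩`, where the constraint matrix and offset are stacked vertically. -/
theorem ahSet_inter_halfspace {n m k p : ℕ}
    (V : Matrix (Fin n) (Fin m) ℝ) (c : Fin n → ℝ)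
    (C : Matrix (Fin k) (Fin m) ℝ) (d : Fin k → ℝ)
    (G : Matrix (Fin p) (Fin n) ℝ) (g : Fin p → ℝ) :
    ahSet V c C d ∩ {x | ∀ i, G.mulVec x i ≤ g i}
      = ahSet V c (Matrix.fromRows C (G * V)) (Sum.elim d (g - G.mulVec c)) := by
  ext x
  simp only [ahSet, Set.mem_inter_iff, Set.mem_setOf_eq]
  constructor
  · rintro ⟨⟨α, hx, hC⟩, hG⟩
    refine ⟨α, hx, ?_⟩
    rintro (i | i)
    · simpa using hC i
    · have := hG i
      rw [hx, Matrix.mulVec_add] at this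
      have e : (Matrix.fromRows C (G * V)).mulVec α (Sum.inr i) = (G * V).mulVec α i := rfl
      rw [e, ← Matrix.mulVec_mulVec]
      simp only [Sum.elim_inr, Pi.sub_apply, Pi.add_apply] at *
      linarith
  · rintro ⟨α, hx, h⟩
    refine ⟨⟨α, hx, fun i => by simpa using h (Sum.inl i)⟩, fun i => ?_⟩
    have := h (Sum.inr i)
    have e : (Matrix.fromRows C (G * V)).mulVec α (Sum.inr i) = G.mulVec (V.mulVec α) i := by
      rw [show (Matrix.fromRows C (G * V)).mulVec α (Sum.inr i) = (G * V).mulVec α i from rfl,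
        ← Matrix.mulVec_mulVec]
    rw [e] at this
    simp only [Sum.elim_inr, Pi.sub_apply] at this
    rw [hx, Matrix.mulVec_add]
    simp only [Pi.add_apply]
    linarith
end

section
/- Let A be an n×n real matrix, t ∈ ℝ, and Θ = ⟨V, c, C, d⟩ an AH-polytope in ℝⁿ. Then the time-t reachable set of the linear system ẋ = Ax from the initial set ⟦Θ⟧, namely the set {φ(t) | φ : ℝ → ℝⁿ, φ(0) ∈ ⟦Θ⟧, and φ'(s) = Aφ(s) for all s}, equals the set represented by the AH-polytope ⟨e^{tA}V, e^{tA}c, C, d⟩, where e^{tA} is the matrix exponential of tA. -/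
attribute [local instance] Matrix.linftyOpNormedRing Matrix.linftyOpNormedAlgebra
  Matrix.linftyOpNormedAddCommGroup Matrix.linftyOpNormedSpace

/-- `mulVec` as a continuous bilinear map. -/
noncomputable def mulVecCLM (n : ℕ) :
    Matrix (Fin n) (Fin n) ℝ →L[ℝ] (Fin n → ℝ) →L[ℝ] (Fin n → ℝ) :=
  LinearMap.toContinuousLinearMap
    ((LinearMap.toContinuousLinearMap.toLinearMap).comp
      (Matrix.toLin' : Matrix (Fin n) (Fin n) ℝ ≃ₗ[ℝ] _).toLinearMap)

@[simp] lemma mulVecCLM_apply {n : ℕ} (M : Matrix (Fin n) (Fin n) ℝ) (x : Fin n → ℝ) :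
    mulVecCLM n M x = M.mulVec x := by
  simp [mulVecCLM, Matrix.toLin'_apply]

lemma hasDerivAt_exp_mulVec {n : ℕ} (A : Matrix (Fin n) (Fin n) ℝ) (x : Fin n → ℝ) (s : ℝ) :
    HasDerivAt (fun u : ℝ => (NormedSpace.exp (u • A)).mulVec x)
      (A.mulVec ((NormedSpace.exp (s • A)).mulVec x)) s := by
  have h1 : HasDerivAt (fun u : ℝ => NormedSpace.exp (u • A))
      (A * NormedSpace.exp (s • A)) s := hasDerivAt_exp_smul_const' A s
  have h2 := ((mulVecCLM n).hasFDerivAt.comp_hasDerivAt s h1).clm_apply (hasDerivAt_const s x)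
  exact h2.congr_deriv (by
    simp only [Function.comp_apply, map_zero, add_zero]
    exact (Matrix.mulVec_mulVec (v := x) (M := A) (N := NormedSpace.exp (s • A))).symm)

lemma sol_eq {n : ℕ} (A : Matrix (Fin n) (Fin n) ℝ) (φ : ℝ → Fin n → ℝ)
    (hφ : ∀ s : ℝ, HasDerivAt φ (A.mulVec (φ s)) s) (t : ℝ) :
    φ t = (NormedSpace.exp (t • A)).mulVec (φ 0) := by
  set ψ : ℝ → Fin n → ℝ := fun u => (NormedSpace.exp (u • (-A))).mulVec (φ u) with hψ
  have hcomm : ∀ s : ℝ, A * NormedSpace.exp (s • (-A)) = NormedSpace.exp (s • (-A)) * A := by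
    intro s
    exact (((Commute.refl A).neg_right).smul_right s).exp_right
  have hder : ∀ s : ℝ, HasDerivAt ψ 0 s := by
    intro s
    have h1 : HasDerivAt (fun u : ℝ => NormedSpace.exp (u • (-A)))
        ((-A) * NormedSpace.exp (s • (-A))) s := hasDerivAt_exp_smul_const' (-A) s
    have hc := (mulVecCLM n).hasFDerivAt.comp_hasDerivAt s h1
    have h2 := hc.clm_apply (hφ s)
    have key : (mulVecCLM n ((-A) * NormedSpace.exp (s • (-A)))) (φ s)
        + (mulVecCLM n (NormedSpace.exp (s • (-A)))) (A.mulVec (φ s)) = 0 := by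
      simp only [mulVecCLM_apply, Matrix.mulVec_mulVec, neg_mul, Matrix.neg_mulVec,
        ← hcomm s]
      simp [Matrix.mulVec_mulVec]
    simp only [Function.comp] at h2
    exact h2.congr_deriv key
  have hconst : ψ t = ψ 0 :=
    is_const_of_deriv_eq_zero (fun x => (hder x).differentiableAt)
      (fun x => (hder x).deriv) t 0
  have h0 : ψ 0 = φ 0 := by simp [hψ]
  have ht : (NormedSpace.exp (t • (-A))).mulVec (φ t) = φ 0 := by
    rw [← h0, ← hconst]
  have hinv : NormedSpace.exp (t • A) * NormedSpace.exp (t • (-A)) = 1 := by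
    rw [show NormedSpace.exp (t • A) * NormedSpace.exp (t • (-A)) = NormedSpace.exp (t • A + t • (-A)) from
      (NormedSpace.exp_add_of_commute ((((Commute.refl A).neg_right).smul_left t).smul_right t)).symm]
    simp
  calc φ t = ((NormedSpace.exp (t • A)) * (NormedSpace.exp (t • (-A)))).mulVec (φ t) := by
        rw [hinv, Matrix.one_mulVec]
    _ = (NormedSpace.exp (t • A)).mulVec (φ 0) := by
        rw [← Matrix.mulVec_mulVec, ht]

/-- Discrete-time reachability of a linear system `ẋ = Ax` over a time step `t` from an
AH-polytope initial set: the time-`t` reachable set is the AH-polytope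
`⟨e^{tA}V, e^{tA}c, C, d⟩`. -/
theorem ahSet_linear_ode_reach {n m k : ℕ}
    (A : Matrix (Fin n) (Fin n) ℝ) (t : ℝ)
    (V : Matrix (Fin n) (Fin m) ℝ) (c : Fin n → ℝ)
    (C : Matrix (Fin k) (Fin m) ℝ) (d : Fin k → ℝ) :
    {x : Fin n → ℝ | ∃ φ : ℝ → (Fin n → ℝ),
        φ 0 ∈ ahSet V c C d ∧ (∀ s : ℝ, HasDerivAt φ (A.mulVec (φ s)) s) ∧ φ t = x}
      = ahSet (NormedSpace.exp (t • A) * V) ((NormedSpace.exp (t • A)).mulVec c) C d := by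
  ext x
  constructor
  · rintro ⟨φ, ⟨α, hα, hCd⟩, hder, rfl⟩
    refine ⟨α, ?_, hCd⟩
    rw [sol_eq A φ hder t, hα]
    rw [Matrix.mulVec_add, Matrix.mulVec_mulVec]
  · rintro ⟨α, hα, hCd⟩
    refine ⟨fun u => (NormedSpace.exp (u • A)).mulVec (V.mulVec α + c), ⟨α, ?_, hCd⟩,
      fun s => hasDerivAt_exp_mulVec A _ s, ?_⟩
    · simp
    · show (NormedSpace.exp (t • A)).mulVec (V.mulVec α + c) = x
      rw [hα, Matrix.mulVec_add, Matrix.mulVec_mulVec]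
end

section
/- Let c ≠ 0 be real and let A be the 4×4 real matrix with rows (0,0,1,0), (0,0,0,1), (0,0,0,−c), (0,0,c,0). Then for all real t, the matrix exponential e^{tA} equals the 4×4 matrix with rows (1, 0, sin(ct)/c, −(1−cos(ct))/c), (0, 1, (1−cos(ct))/c, sin(ct)/c), (0, 0, cos(ct), −sin(ct)), (0, 0, sin(ct), cos(ct)). -/
set_option maxHeartbeats 1000000

open NormedSpace Matrix

/-- The embedding of `ℝ × ℂ` into 4×4 real matrices as block-diagonal
`diag(a·I₂, [[re z, im z],[-im z, re z]])`. -/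
noncomputable def turnEmbed : (ℝ × ℂ) →ₐ[ℝ] Matrix (Fin 4) (Fin 4) ℝ where
  toFun p := !![p.1, 0, 0, 0;
                0, p.1, 0, 0;
                0, 0, p.2.re, p.2.im;
                0, 0, -p.2.im, p.2.re]
  map_one' := by
    ext i j
    fin_cases i <;> fin_cases j <;>
      simp [Matrix.one_apply, Matrix.vecHead, Matrix.vecTail]
  map_mul' p q := by
    ext i j
    fin_cases i <;> fin_cases j
    all_goals try simp [Matrix.mul_apply, Fin.sum_univ_four, Complex.mul_re, Complex.mul_im, Matrix.vecHead, Matrix.vecTail]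
    all_goals try ring
  map_zero' := by
    ext i j
    fin_cases i <;> fin_cases j <;> simp [Matrix.vecHead, Matrix.vecTail]
  map_add' p q := by
    ext i j
    fin_cases i <;> fin_cases j
    all_goals try simp [Matrix.vecHead, Matrix.vecTail]
    all_goals ring
  commutes' r := by
    ext i j
    fin_cases i <;> fin_cases j <;>
      simp [Algebra.algebraMap_eq_smul_one, Matrix.smul_apply, Matrix.one_apply, Matrix.vecHead, Matrix.vecTail]

theorem turnEmbed_apply (p : ℝ × ℂ) :
    turnEmbed p = !![p.1, 0, 0, 0;
                0, p.1, 0, 0;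
                0, 0, p.2.re, p.2.im;
                0, 0, -p.2.im, p.2.re] := rfl

theorem continuous_turnEmbed : Continuous turnEmbed :=
  turnEmbed.toLinearMap.continuous_of_finiteDimensional

/-- The matrix exponential of the ownship turn-dynamics block: for `c ≠ 0` and
`A = [[0,0,1,0],[0,0,0,1],[0,0,0,−c],[0,0,c,0]]`,
`e^{tA} = [[1,0,sin(ct)/c,−(1−cos(ct))/c],[0,1,(1−cos(ct))/c,sin(ct)/c],
[0,0,cos(ct),−sin(ct)],[0,0,sin(ct),cos(ct)]]`. -/
theorem exp_turn_dynamics (c : ℝ) (hc : c ≠ 0) (t : ℝ) :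
    NormedSpace.exp
        (t • (!![0, 0, 1, 0;
                 0, 0, 0, 1;
                 0, 0, 0, -c;
                 0, 0, c, 0] : Matrix (Fin 4) (Fin 4) ℝ))
      = !![1, 0, Real.sin (c * t) / c, -((1 - Real.cos (c * t)) / c);
           0, 1, (1 - Real.cos (c * t)) / c, Real.sin (c * t) / c;
           0, 0, Real.cos (c * t), -Real.sin (c * t);
           0, 0, Real.sin (c * t), Real.cos (c * t)] := by
  set P : Matrix (Fin 4) (Fin 4) ℝ :=
    !![1, 0, 0, -(1/c); 0, 1, -(1/c), 0; 0, 0, 1, 0; 0, 0, 0, -1] with hP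
  set Q : Matrix (Fin 4) (Fin 4) ℝ :=
    !![1, 0, 0, -(1/c); 0, 1, 1/c, 0; 0, 0, 1, 0; 0, 0, 0, -1] with hQ
  have hPQ : P * Q = 1 := by
    ext i j
    fin_cases i <;> fin_cases j
    all_goals try simp [hP, hQ, Matrix.mul_apply, Fin.sum_univ_four, Matrix.one_apply, Matrix.vecHead, Matrix.vecTail]
    all_goals field_simp
  have hPinv : P⁻¹ = Q := Matrix.inv_eq_right_inv hPQ
  have hPunit : IsUnit P :=
    (Matrix.isUnit_iff_isUnit_det P).mpr <|
      IsUnit.of_mul_eq_one Q.det (by rw [← Matrix.det_mul, hPQ, Matrix.det_one])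
  -- decompose t • A as a conjugate of the image of (0, (c*t)•I)
  have hdecomp :
      (t • (!![0, 0, 1, 0;
               0, 0, 0, 1;
               0, 0, 0, -c;
               0, 0, c, 0] : Matrix (Fin 4) (Fin 4) ℝ))
        = P * turnEmbed (0, (c * t : ℝ) * Complex.I) * P⁻¹ := by
    rw [hPinv]
    ext i j
    fin_cases i <;> fin_cases j
    all_goals try simp [hP, hQ, turnEmbed_apply, Matrix.mul_apply, Fin.sum_univ_four, Matrix.vecHead, Matrix.vecTail]
    all_goals try field_simp
    all_goals try ring
  have key : exp (turnEmbed ((0:ℝ), (c * t : ℝ) * Complex.I))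
      = turnEmbed (exp ((0:ℝ), (c * t : ℝ) * Complex.I)) := by
    letI : SeminormedRing (Matrix (Fin 4) (Fin 4) ℝ) := Matrix.linftyOpSemiNormedRing
    letI : NormedRing (Matrix (Fin 4) (Fin 4) ℝ) := Matrix.linftyOpNormedRing
    letI : NormedAlgebra ℝ (Matrix (Fin 4) (Fin 4) ℝ) := Matrix.linftyOpNormedAlgebra
    exact (map_exp turnEmbed continuous_turnEmbed _).symm
  rw [hdecomp, Matrix.exp_conj P (turnEmbed ((0:ℝ), (c * t : ℝ) * Complex.I)) hPunit, key]
  have hexp : exp ((0 : ℝ), (c * t : ℝ) * Complex.I)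
      = ((1 : ℝ), Complex.exp ((c * t : ℝ) * Complex.I)) := by
    have h1 : (exp ((0 : ℝ), (c * t : ℝ) * Complex.I)).1 = exp (0 : ℝ) :=
      map_exp (RingHom.fst ℝ ℂ) continuous_fst _
    have h2 : (exp ((0 : ℝ), (c * t : ℝ) * Complex.I)).2 = exp ((c * t : ℝ) * Complex.I) :=
      map_exp (RingHom.snd ℝ ℂ) continuous_snd _
    have h3 : (exp : ℂ → ℂ) = Complex.exp := by
      rw [Complex.exp_eq_exp_ℂ]
    refine Prod.ext ?_ ?_
    · rw [h1, exp_zero]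
    · rw [h2, h3]
  rw [hexp, Complex.exp_mul_I, hPinv]
  ext i j
  fin_cases i <;> fin_cases j
  all_goals try simp [hP, hQ, turnEmbed_apply, Matrix.mul_apply, Fin.sum_univ_four,
      Complex.add_re, Complex.add_im, Complex.cos_ofReal_re, Complex.cos_ofReal_im,
      Complex.sin_ofReal_re, Complex.sin_ofReal_im, ← Complex.ofReal_mul,
      Matrix.vecHead, Matrix.vecTail]
  all_goals try field_simp
  all_goals try ring
end

section
/- Let 0 ≤ v_min ≤ v_max and let θ_lb < θ_ub be real numbers with θ_ub − θ_lb < π. Define the points a = v_min·(cos θ_lb, sin θ_lb), b = v_min·(cos θ_ub, sin θ_ub), c = v_max·(cos θ_lb, sin θ_lb), d = v_max·(cos θ_ub, sin θ_ub), θ_mid = (θ_lb + θ_ub)/2, and e = (v_max / cos((θ_ub − θ_lb)/2))·(cos θ_mid, sin θ_mid). Then for every v ∈ [v_min, v_max] and every θ ∈ [θ_lb, θ_ub], the point (v·cos θ, v·sin θ) lies in the convex hull of {a, b, c, d, e}. -/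
set_option maxHeartbeats 1000000

private lemma vel_sc_combo {x y p : Fin 2 → ℝ} {w1 w2 : ℝ} (h1 : 0 ≤ w1) (h2 : 0 ≤ w2)
    (hs : w1 + w2 = 1) (hp : p = w1 • x + w2 • y) : p ∈ segment ℝ x y :=
  ⟨w1, w2, h1, h2, hs, hp.symm⟩



/-- Covering the annular sector of velocity vectors by five points: every vector
`(v·cos θ, v·sin θ)` with speed `v ∈ [v_min, v_max]` and heading `θ ∈ [θ_lb, θ_ub]`
(with `θ_ub − θ_lb < π`) lies in the convex hull of the points `a, b, c, d, e`, where
`a, b` are at the extreme angles and minimum speed, `c, d` at the extreme angles and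
maximum speed, and `e` is the intersection of the tangent lines to the maximum-speed
circle at `c` and `d`. -/
theorem velocity_sector_convex_cover
    (vmin vmax θlb θub : ℝ)
    (hv0 : 0 ≤ vmin) (hv : vmin ≤ vmax)
    (hθ : θlb < θub) (hθπ : θub - θlb < Real.pi) :
    ∀ v θ : ℝ, v ∈ Set.Icc vmin vmax → θ ∈ Set.Icc θlb θub →
      (![v * Real.cos θ, v * Real.sin θ] : Fin 2 → ℝ) ∈
        convexHull ℝ
          ({![vmin * Real.cos θlb, vmin * Real.sin θlb],
            ![vmin * Real.cos θub, vmin * Real.sin θub],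
            ![vmax * Real.cos θlb, vmax * Real.sin θlb],
            ![vmax * Real.cos θub, vmax * Real.sin θub],
            ![(vmax / Real.cos ((θub - θlb) / 2)) * Real.cos ((θlb + θub) / 2),
              (vmax / Real.cos ((θub - θlb) / 2)) * Real.sin ((θlb + θub) / 2)]} :
            Set (Fin 2 → ℝ)) := by
  intro v θ hvm hθm
  obtain ⟨hv1, hv2⟩ := hvm
  obtain ⟨ht1, ht2⟩ := hθm
  set S : Set (Fin 2 → ℝ) :=
          ({![vmin * Real.cos θlb, vmin * Real.sin θlb],
            ![vmin * Real.cos θub, vmin * Real.sin θub],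
            ![vmax * Real.cos θlb, vmax * Real.sin θlb],
            ![vmax * Real.cos θub, vmax * Real.sin θub],
            ![(vmax / Real.cos ((θub - θlb) / 2)) * Real.cos ((θlb + θub) / 2),
              (vmax / Real.cos ((θub - θlb) / 2)) * Real.sin ((θlb + θub) / 2)]} :
            Set (Fin 2 → ℝ)) with hS
  have hvmax0 : 0 ≤ vmax := le_trans hv0 hv
  have hπ := Real.pi_pos
  have hh0 : 0 < (θub - θlb) / 2 := by linarith
  have hh2 : (θub - θlb) / 2 < Real.pi / 2 := by linarith
  have hch : 0 < Real.cos ((θub - θlb) / 2) :=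
    Real.cos_pos_of_mem_Ioo ⟨by linarith, hh2⟩
  have hsh : 0 < Real.sin ((θub - θlb) / 2) :=
    Real.sin_pos_of_pos_of_lt_pi hh0 (by linarith)
  have hsA : 0 ≤ Real.sin (θub - θ) :=
    Real.sin_nonneg_of_nonneg_of_le_pi (by linarith) (by linarith)
  have hsB : 0 ≤ Real.sin (θ - θlb) :=
    Real.sin_nonneg_of_nonneg_of_le_pi (by linarith) (by linarith)
  have hS0 : 0 < Real.sin (θub - θlb) :=
    Real.sin_pos_of_pos_of_lt_pi (by linarith) hθπ
  -- inner point on the chord [a, b]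
  have hSD1 : Real.sin (θub - θlb) ≤ Real.sin (θub - θ) + Real.sin (θ - θlb) := by
    have hrw : θub - θlb = (θub - θ) + (θ - θlb) := by ring
    rw [hrw, Real.sin_add]
    nlinarith [Real.cos_le_one (θub - θ), Real.cos_le_one (θ - θlb)]
  have hD1 : 0 < Real.sin (θub - θ) + Real.sin (θ - θlb) := lt_of_lt_of_le hS0 hSD1
  set r1 : ℝ := vmin * Real.sin (θub - θlb) / (Real.sin (θub - θ) + Real.sin (θ - θlb))
    with hr1
  have hr1v : r1 ≤ v := by
    have : r1 ≤ vmin := by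
      rw [hr1, div_le_iff₀ hD1]
      nlinarith [mul_le_mul_of_nonneg_left hSD1 hv0]
    linarith
  have hmem1 : (![r1 * Real.cos θ, r1 * Real.sin θ] : Fin 2 → ℝ) ∈ convexHull ℝ S := by
    have ha : (![vmin * Real.cos θlb, vmin * Real.sin θlb] : Fin 2 → ℝ) ∈ S := by
      rw [hS]; left; rfl
    have hb : (![vmin * Real.cos θub, vmin * Real.sin θub] : Fin 2 → ℝ) ∈ S := by
      rw [hS]; right; left; rfl
    apply (convex_convexHull ℝ S).segment_subset (subset_convexHull ℝ S ha)
      (subset_convexHull ℝ S hb)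
    apply vel_sc_combo (w1 := Real.sin (θub - θ) / (Real.sin (θub - θ) + Real.sin (θ - θlb)))
      (w2 := Real.sin (θ - θlb) / (Real.sin (θub - θ) + Real.sin (θ - θlb)))
      (div_nonneg hsA hD1.le) (div_nonneg hsB hD1.le)
      (by rw [← add_div, div_self hD1.ne'])
    funext i
    fin_cases i <;>
      simp only [Matrix.cons_val_zero, Matrix.cons_val_one, Matrix.head_cons,
        Pi.add_apply, Pi.smul_apply, smul_eq_mul, Fin.mk_zero, Fin.mk_one, Fin.isValue, hr1]
    · have key : Real.sin (θub - θ) * Real.cos θlb + Real.sin (θ - θlb) * Real.cos θub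
          = Real.sin (θub - θlb) * Real.cos θ := by
        simp only [Real.sin_sub]; ring
      field_simp
      linear_combination (-vmin) * key
    · have key : Real.sin (θub - θ) * Real.sin θlb + Real.sin (θ - θlb) * Real.sin θub
          = Real.sin (θub - θlb) * Real.sin θ := by
        simp only [Real.sin_sub]; ring
      field_simp
      linear_combination (-vmin) * key
  -- outer point on [d, e] or [c, e]
  have hmem2 : ∃ r2 : ℝ, v ≤ r2 ∧
      (![r2 * Real.cos θ, r2 * Real.sin θ] : Fin 2 → ℝ) ∈ convexHull ℝ S := by
    have hcc : Real.cos ((θub - θlb) / 2) * (vmax / Real.cos ((θub - θlb) / 2)) = vmax :=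
      mul_div_cancel₀ vmax hch.ne'
    rcases le_total ((θlb + θub) / 2) θ with hmid | hmid
    · -- upper half: outer segment [d, e]
      have hX0 : 0 ≤ Real.sin (θ - (θlb + θub) / 2) :=
        Real.sin_nonneg_of_nonneg_of_le_pi (by linarith) (by linarith)
      have hcA : 0 < Real.cos (θub - θ) :=
        Real.cos_pos_of_mem_Ioo ⟨by linarith, by linarith⟩
      have hD2eq : Real.sin (θ - (θlb + θub) / 2)
            + Real.sin (θub - θ) * Real.cos ((θub - θlb) / 2)
          = Real.cos (θub - θ) * Real.sin ((θub - θlb) / 2) := by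
        have hrw : θ - (θlb + θub) / 2 = (θub - θlb) / 2 - (θub - θ) := by ring
        rw [hrw, Real.sin_sub]; ring
      have hD2 : 0 < Real.sin (θ - (θlb + θub) / 2)
          + Real.sin (θub - θ) * Real.cos ((θub - θlb) / 2) := by
        rw [hD2eq]; exact mul_pos hcA hsh
      refine ⟨vmax * Real.sin ((θub - θlb) / 2) / (Real.sin (θ - (θlb + θub) / 2)
        + Real.sin (θub - θ) * Real.cos ((θub - θlb) / 2)), ?_, ?_⟩
      · have h1 : vmax ≤ vmax * Real.sin ((θub - θlb) / 2) / (Real.sin (θ - (θlb + θub) / 2)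
            + Real.sin (θub - θ) * Real.cos ((θub - θlb) / 2)) := by
          rw [le_div_iff₀ hD2, hD2eq]
          nlinarith [mul_le_mul_of_nonneg_left (Real.cos_le_one (θub - θ))
            (mul_nonneg hvmax0 hsh.le)]
        linarith
      · have hd : (![vmax * Real.cos θub, vmax * Real.sin θub] : Fin 2 → ℝ) ∈ S := by
          rw [hS]; right; right; right; left; rfl
        have he : (![(vmax / Real.cos ((θub - θlb) / 2)) * Real.cos ((θlb + θub) / 2),
            (vmax / Real.cos ((θub - θlb) / 2)) * Real.sin ((θlb + θub) / 2)]
            : Fin 2 → ℝ) ∈ S := by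
          rw [hS]; right; right; right; right; rfl
        apply (convex_convexHull ℝ S).segment_subset (subset_convexHull ℝ S hd)
          (subset_convexHull ℝ S he)
        apply vel_sc_combo
          (w1 := Real.sin (θ - (θlb + θub) / 2) / (Real.sin (θ - (θlb + θub) / 2)
            + Real.sin (θub - θ) * Real.cos ((θub - θlb) / 2)))
          (w2 := Real.sin (θub - θ) * Real.cos ((θub - θlb) / 2)
            / (Real.sin (θ - (θlb + θub) / 2)
            + Real.sin (θub - θ) * Real.cos ((θub - θlb) / 2)))
          (div_nonneg hX0 hD2.le) (div_nonneg (mul_nonneg hsA hch.le) hD2.le)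
          (by rw [← add_div, div_self hD2.ne'])
        funext i
        fin_cases i <;>
          simp only [Matrix.cons_val_zero, Matrix.cons_val_one, Matrix.head_cons,
            Pi.add_apply, Pi.smul_apply, smul_eq_mul, Fin.mk_zero, Fin.mk_one, Fin.isValue]
        · have key : Real.sin (θ - (θlb + θub) / 2) * Real.cos θub
              + Real.sin (θub - θ) * Real.cos ((θlb + θub) / 2)
              = Real.sin ((θub - θlb) / 2) * Real.cos θ := by
            have hrw : (θub - θlb) / 2 = θub - (θlb + θub) / 2 := by ring
            rw [hrw]; simp only [Real.sin_sub]; ring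
          have hnum : vmax * Real.sin ((θub - θlb) / 2) * Real.cos θ
              = Real.sin (θ - (θlb + θub) / 2) * (vmax * Real.cos θub)
              + Real.sin (θub - θ) * Real.cos ((θub - θlb) / 2)
                * ((vmax / Real.cos ((θub - θlb) / 2)) * Real.cos ((θlb + θub) / 2)) := by
            linear_combination (-vmax) * key
              - Real.sin (θub - θ) * Real.cos ((θlb + θub) / 2) * hcc
          rw [div_mul_eq_mul_div, div_mul_eq_mul_div, div_mul_eq_mul_div, ← add_div]
          exact congrArg (· / (Real.sin (θ - (θlb + θub) / 2)
            + Real.sin (θub - θ) * Real.cos ((θub - θlb) / 2))) hnum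
        · have key : Real.sin (θ - (θlb + θub) / 2) * Real.sin θub
              + Real.sin (θub - θ) * Real.sin ((θlb + θub) / 2)
              = Real.sin ((θub - θlb) / 2) * Real.sin θ := by
            have hrw : (θub - θlb) / 2 = θub - (θlb + θub) / 2 := by ring
            rw [hrw]; simp only [Real.sin_sub]; ring
          have hnum : vmax * Real.sin ((θub - θlb) / 2) * Real.sin θ
              = Real.sin (θ - (θlb + θub) / 2) * (vmax * Real.sin θub)
              + Real.sin (θub - θ) * Real.cos ((θub - θlb) / 2)
                * ((vmax / Real.cos ((θub - θlb) / 2)) * Real.sin ((θlb + θub) / 2)) := by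
            linear_combination (-vmax) * key
              - Real.sin (θub - θ) * Real.sin ((θlb + θub) / 2) * hcc
          rw [div_mul_eq_mul_div, div_mul_eq_mul_div, div_mul_eq_mul_div, ← add_div]
          exact congrArg (· / (Real.sin (θ - (θlb + θub) / 2)
            + Real.sin (θub - θ) * Real.cos ((θub - θlb) / 2))) hnum
    · -- lower half: outer segment [c, e]
      have hX0 : 0 ≤ Real.sin ((θlb + θub) / 2 - θ) :=
        Real.sin_nonneg_of_nonneg_of_le_pi (by linarith) (by linarith)
      have hcA : 0 < Real.cos (θ - θlb) :=
        Real.cos_pos_of_mem_Ioo ⟨by linarith, by linarith⟩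
      have hD2eq : Real.sin ((θlb + θub) / 2 - θ)
            + Real.sin (θ - θlb) * Real.cos ((θub - θlb) / 2)
          = Real.cos (θ - θlb) * Real.sin ((θub - θlb) / 2) := by
        have hrw : (θlb + θub) / 2 - θ = (θub - θlb) / 2 - (θ - θlb) := by ring
        rw [hrw, Real.sin_sub]; ring
      have hD2 : 0 < Real.sin ((θlb + θub) / 2 - θ)
          + Real.sin (θ - θlb) * Real.cos ((θub - θlb) / 2) := by
        rw [hD2eq]; exact mul_pos hcA hsh
      refine ⟨vmax * Real.sin ((θub - θlb) / 2) / (Real.sin ((θlb + θub) / 2 - θ)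
        + Real.sin (θ - θlb) * Real.cos ((θub - θlb) / 2)), ?_, ?_⟩
      · have h1 : vmax ≤ vmax * Real.sin ((θub - θlb) / 2) / (Real.sin ((θlb + θub) / 2 - θ)
            + Real.sin (θ - θlb) * Real.cos ((θub - θlb) / 2)) := by
          rw [le_div_iff₀ hD2, hD2eq]
          nlinarith [mul_le_mul_of_nonneg_left (Real.cos_le_one (θ - θlb))
            (mul_nonneg hvmax0 hsh.le)]
        linarith
      · have hc : (![vmax * Real.cos θlb, vmax * Real.sin θlb] : Fin 2 → ℝ) ∈ S := by
          rw [hS]; right; right; left; rfl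
        have he : (![(vmax / Real.cos ((θub - θlb) / 2)) * Real.cos ((θlb + θub) / 2),
            (vmax / Real.cos ((θub - θlb) / 2)) * Real.sin ((θlb + θub) / 2)]
            : Fin 2 → ℝ) ∈ S := by
          rw [hS]; right; right; right; right; rfl
        apply (convex_convexHull ℝ S).segment_subset (subset_convexHull ℝ S hc)
          (subset_convexHull ℝ S he)
        apply vel_sc_combo
          (w1 := Real.sin ((θlb + θub) / 2 - θ) / (Real.sin ((θlb + θub) / 2 - θ)
            + Real.sin (θ - θlb) * Real.cos ((θub - θlb) / 2)))
          (w2 := Real.sin (θ - θlb) * Real.cos ((θub - θlb) / 2)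
            / (Real.sin ((θlb + θub) / 2 - θ)
            + Real.sin (θ - θlb) * Real.cos ((θub - θlb) / 2)))
          (div_nonneg hX0 hD2.le) (div_nonneg (mul_nonneg hsB hch.le) hD2.le)
          (by rw [← add_div, div_self hD2.ne'])
        funext i
        fin_cases i <;>
          simp only [Matrix.cons_val_zero, Matrix.cons_val_one, Matrix.head_cons,
            Pi.add_apply, Pi.smul_apply, smul_eq_mul, Fin.mk_zero, Fin.mk_one, Fin.isValue]
        · have key : Real.sin ((θlb + θub) / 2 - θ) * Real.cos θlb
              + Real.sin (θ - θlb) * Real.cos ((θlb + θub) / 2)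
              = Real.sin ((θub - θlb) / 2) * Real.cos θ := by
            have hrw : (θub - θlb) / 2 = (θlb + θub) / 2 - θlb := by ring
            rw [hrw]; simp only [Real.sin_sub]; ring
          have hnum : vmax * Real.sin ((θub - θlb) / 2) * Real.cos θ
              = Real.sin ((θlb + θub) / 2 - θ) * (vmax * Real.cos θlb)
              + Real.sin (θ - θlb) * Real.cos ((θub - θlb) / 2)
                * ((vmax / Real.cos ((θub - θlb) / 2)) * Real.cos ((θlb + θub) / 2)) := by
            linear_combination (-vmax) * key
              - Real.sin (θ - θlb) * Real.cos ((θlb + θub) / 2) * hcc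
          rw [div_mul_eq_mul_div, div_mul_eq_mul_div, div_mul_eq_mul_div, ← add_div]
          exact congrArg (· / (Real.sin ((θlb + θub) / 2 - θ)
            + Real.sin (θ - θlb) * Real.cos ((θub - θlb) / 2))) hnum
        · have key : Real.sin ((θlb + θub) / 2 - θ) * Real.sin θlb
              + Real.sin (θ - θlb) * Real.sin ((θlb + θub) / 2)
              = Real.sin ((θub - θlb) / 2) * Real.sin θ := by
            have hrw : (θub - θlb) / 2 = (θlb + θub) / 2 - θlb := by ring
            rw [hrw]; simp only [Real.sin_sub]; ring
          have hnum : vmax * Real.sin ((θub - θlb) / 2) * Real.sin θ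
              = Real.sin ((θlb + θub) / 2 - θ) * (vmax * Real.sin θlb)
              + Real.sin (θ - θlb) * Real.cos ((θub - θlb) / 2)
                * ((vmax / Real.cos ((θub - θlb) / 2)) * Real.sin ((θlb + θub) / 2)) := by
            linear_combination (-vmax) * key
              - Real.sin (θ - θlb) * Real.sin ((θlb + θub) / 2) * hcc
          rw [div_mul_eq_mul_div, div_mul_eq_mul_div, div_mul_eq_mul_div, ← add_div]
          exact congrArg (· / (Real.sin ((θlb + θub) / 2 - θ)
            + Real.sin (θ - θlb) * Real.cos ((θub - θlb) / 2))) hnum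
  obtain ⟨r2, hvr2, hmem2⟩ := hmem2
  have hseg : v ∈ segment ℝ r1 r2 := by
    rw [segment_eq_Icc (le_trans hr1v hvr2)]
    exact ⟨hr1v, hvr2⟩
  obtain ⟨wa, wb, hwa, hwb, hab, hvv⟩ := hseg
  simp only [smul_eq_mul] at hvv
  refine (convex_convexHull ℝ S).segment_subset hmem1 hmem2
    (vel_sc_combo hwa hwb hab ?_)
  funext i
  fin_cases i <;>
    simp only [Matrix.cons_val_zero, Matrix.cons_val_one, Matrix.head_cons,
      Pi.add_apply, Pi.smul_apply, smul_eq_mul, Fin.mk_zero, Fin.mk_one, Fin.isValue]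
  · linear_combination Real.cos θ * hvv.symm
  · linear_combination Real.sin θ * hvv.symm
end
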